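/- For the region A(ξ) = {(x,y) ∈ (0,1]² : x + y > 1, xy ≥ 1/ξ}, the Lebesgue measure of A(ξ) equals 0 if 0 < ξ ≤ 1; equals 1 − (log ξ + 1)/ξ if 1 ≤ ξ ≤ 4; and equals 1 − 1/ξ − (1/2)√(1 − 4/ξ) + (2/ξ)·log((1 + √(1 − 4/ξ))/2) if ξ ≥ 4. -/

import Mathlib

open MeasureTheory

/-- The region `A(ξ) = {(x,y) ∈ (0,1]² : x + y > 1, xy ≥ 1/ξ}`. -/
def regionA (ξ : ℝ) : Set (ℝ × ℝ) :=
  {p | p.1 ∈ Set.Ioc (0:ℝ) 1 ∧ p.2 ∈ Set.Ioc (0:ℝ) 1 ∧ 1 < p.1 + p.2 ∧ 1 / ξ ≤ p.1 * p.2}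

lemma regionA_measurable (ξ : ℝ) : MeasurableSet (regionA ξ) := by
  have : regionA ξ = (Set.Ioc (0:ℝ) 1 ×ˢ Set.Ioc (0:ℝ) 1) ∩ {p : ℝ × ℝ | 1 < p.1 + p.2}
      ∩ {p : ℝ × ℝ | 1/ξ ≤ p.1 * p.2} := by
    ext p; simp [regionA, Set.mem_prod]; tauto
  rw [this]
  exact (((measurableSet_Ioc.prod measurableSet_Ioc).inter
    (measurableSet_lt measurable_const (measurable_fst.add measurable_snd))).inter
    (measurableSet_le measurable_const (measurable_fst.mul measurable_snd)))

lemma volume_regionA_eq (ξ : ℝ) (hξ : 0 < ξ) :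
    volume (regionA ξ)
      = ∫⁻ x in Set.Ioc (0:ℝ) 1, ENNReal.ofReal (1 - max (1 - x) (1/(ξ*x))) := by
  rw [Measure.volume_eq_prod, Measure.prod_apply (regionA_measurable ξ)]
  have hsec : ∀ x : ℝ, volume (Prod.mk x ⁻¹' regionA ξ)
      = (Set.Ioc (0:ℝ) 1).indicator
          (fun x => ENNReal.ofReal (1 - max (1 - x) (1/(ξ*x)))) x := by
    intro x
    by_cases hx : x ∈ Set.Ioc (0:ℝ) 1
    · rw [Set.indicator_of_mem hx]
      have hx0 : 0 < x := hx.1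
      set m := max (1 - x) (1/(ξ*x)) with hm
      have hd0 : 0 < 1/(ξ*x) := by positivity
      have hsub1 : Set.Ioc m 1 ⊆ Prod.mk x ⁻¹' regionA ξ := by
        intro y hy
        have hy1 : 1 - x < y := lt_of_le_of_lt (le_max_left _ _) hy.1
        have hy2 : 1/(ξ*x) < y := lt_of_le_of_lt (le_max_right _ _) hy.1
        refine ⟨hx, ⟨lt_trans hd0 hy2, hy.2⟩, by linarith, ?_⟩
        rw [div_lt_iff₀ (by positivity)] at hy2
        rw [div_le_iff₀ hξ]
        nlinarith
      have hsub2 : Prod.mk x ⁻¹' regionA ξ ⊆ Set.Icc m 1 := by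
        intro y hy
        obtain ⟨_, hy2, hy3, hy4⟩ := hy
        constructor
        · apply max_le (by linarith)
          rw [div_le_iff₀ hξ] at hy4
          rw [div_le_iff₀ (by positivity)]
          nlinarith
        · exact hy2.2
      refine le_antisymm ?_ ?_
      · calc volume (Prod.mk x ⁻¹' regionA ξ) ≤ volume (Set.Icc m 1) := measure_mono hsub2
          _ = ENNReal.ofReal (1 - m) := Real.volume_Icc
      · calc ENNReal.ofReal (1 - m) = volume (Set.Ioc m 1) := Real.volume_Ioc.symm
          _ ≤ _ := measure_mono hsub1
    · rw [Set.indicator_of_notMem hx]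
      have : Prod.mk x ⁻¹' regionA ξ = ∅ := by
        ext y; simp only [Set.mem_preimage, Set.mem_empty_iff_false, iff_false]
        intro h; exact hx h.1
      simp [this]
  simp only [hsec]
  rw [lintegral_indicator measurableSet_Ioc]

lemma piece (u v : ℝ) (huv : u ≤ v) (f : ℝ → ℝ) (hf : IntegrableOn f (Set.Ioc u v))
    (h0 : ∀ x ∈ Set.Ioc u v, 0 ≤ f x) :
    ∫⁻ x in Set.Ioc u v, ENNReal.ofReal (f x) = ENNReal.ofReal (∫ x in u..v, f x) := by
  rw [intervalIntegral.integral_of_le huv,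
    ofReal_integral_eq_lintegral_ofReal hf
      ((ae_restrict_iff' measurableSet_Ioc).2 (ae_of_all _ h0))]

lemma cont_integrand {ξ : ℝ} (hξ : 0 < ξ) {u v : ℝ} (hu : 0 < u) :
    IntegrableOn (fun x => 1 - 1/(ξ*x)) (Set.Ioc u v) := by
  apply (ContinuousOn.integrableOn_Icc ?_).mono_set Set.Ioc_subset_Icc_self
  apply continuousOn_const.sub
  apply continuousOn_const.div (continuousOn_const.mul continuousOn_id)
  intro x hx
  have : 0 < x := lt_of_lt_of_le hu hx.1
  exact mul_ne_zero (ne_of_gt hξ) (ne_of_gt this)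

lemma eval_piece {ξ : ℝ} (hξ : 0 < ξ) {u v : ℝ} (hu : 0 < u) (huv : u ≤ v) :
    ∫ x in u..v, (1 - 1/(ξ*x)) = (v - u) - (1/ξ) * (Real.log v - Real.log u) := by
  have hv : 0 < v := lt_of_lt_of_le hu huv
  have h0 : (0:ℝ) ∉ Set.uIcc u v := by
    rw [Set.uIcc_of_le huv]; intro h; exact absurd h.1 (by linarith)
  have hinv : IntervalIntegrable (fun x => x⁻¹) volume u v :=
    intervalIntegral.intervalIntegrable_inv (f := id) (fun x hx => by
      rw [Set.uIcc_of_le huv] at hx; simp only [id]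
      exact ne_of_gt (lt_of_lt_of_le hu hx.1))
      continuousOn_id
  have : ∀ x : ℝ, 1 - 1/(ξ*x) = 1 - ξ⁻¹ * x⁻¹ := by
    intro x; rw [one_div, mul_inv]
  simp only [this]
  rw [intervalIntegral.integral_sub intervalIntegrable_const (hinv.const_mul _),
    intervalIntegral.integral_const, intervalIntegral.integral_const_mul,
    integral_inv h0, Real.log_div (by positivity) (by positivity)]
  simp only [smul_eq_mul, mul_one, one_div]

lemma case2 {ξ : ℝ} (h1 : 1 ≤ ξ) (h4 : ξ ≤ 4) :
    volume (regionA ξ) = ENNReal.ofReal (1 - (Real.log ξ + 1) / ξ) := by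
  have hξ : 0 < ξ := lt_of_lt_of_le one_pos h1
  have hinv1 : 1/ξ ≤ 1 := by rw [div_le_one hξ]; exact h1
  have hinv0 : (0:ℝ) < 1/ξ := by positivity
  rw [volume_regionA_eq ξ hξ,
    ← Set.Ioc_union_Ioc_eq_Ioc (le_of_lt hinv0) hinv1,
    lintegral_union measurableSet_Ioc (Set.Ioc_disjoint_Ioc_of_le le_rfl)]
  have hzero : ∫⁻ x in Set.Ioc (0:ℝ) (1/ξ), ENNReal.ofReal (1 - max (1 - x) (1/(ξ*x))) = 0 := by
    rw [setLIntegral_congr_fun measurableSet_Ioc (fun x hx => ?_), lintegral_zero]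
    have hx0 : 0 < x := hx.1
    have h1le : 1 ≤ 1/(ξ*x) := by
      rw [le_div_iff₀ (by positivity), one_mul]
      calc ξ * x ≤ ξ * (1/ξ) := by
            apply mul_le_mul_of_nonneg_left hx.2 (le_of_lt hξ)
        _ = 1 := by field_simp
    rw [ENNReal.ofReal_eq_zero]
    have := le_max_right (1-x) (1/(ξ*x))
    linarith
  have hmax : ∀ x ∈ Set.Ioc (1/ξ) 1, max (1 - x) (1/(ξ*x)) = 1/(ξ*x) := by
    intro x hx
    have hx0 : 0 < x := lt_trans hinv0 hx.1
    apply max_eq_right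
    rw [le_div_iff₀ (by positivity)]
    nlinarith [sq_nonneg (2*x - 1), hx.2]
  have hcongr : ∫⁻ x in Set.Ioc (1/ξ) 1, ENNReal.ofReal (1 - max (1 - x) (1/(ξ*x)))
      = ∫⁻ x in Set.Ioc (1/ξ) 1, ENNReal.ofReal (1 - 1/(ξ*x)) :=
    setLIntegral_congr_fun measurableSet_Ioc (fun x hx => by rw [hmax x hx])
  rw [hzero, hcongr, zero_add,
    piece _ _ hinv1 _ (cont_integrand hξ hinv0) (fun x hx => ?_),
    eval_piece hξ hinv0 hinv1]
  · congr 1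
    rw [Real.log_one, one_div, Real.log_inv]
    ring
  · have hx0 : 0 < x := lt_trans hinv0 hx.1
    have : 1/(ξ*x) ≤ 1 := by
      rw [div_le_one (by positivity)]
      calc 1 = ξ * (1/ξ) := by field_simp
        _ ≤ ξ * x := mul_le_mul_of_nonneg_left (le_of_lt hx.1) (le_of_lt hξ)
    linarith

lemma case3 {ξ : ℝ} (h4 : 4 ≤ ξ) :
    volume (regionA ξ) = ENNReal.ofReal
        (1 - 1 / ξ - (1 / 2) * Real.sqrt (1 - 4 / ξ) +
          (2 / ξ) * Real.log ((1 + Real.sqrt (1 - 4 / ξ)) / 2)) := by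
  have hξ : 0 < ξ := by linarith
  set s : ℝ := Real.sqrt (1 - 4/ξ) with hs_def
  have h4ξ : 4/ξ ≤ 1 := by rw [div_le_one hξ]; exact h4
  have h4ξ0 : 0 < 4/ξ := by positivity
  have hs0 : 0 ≤ s := Real.sqrt_nonneg _
  have hs2 : s^2 = 1 - 4/ξ := Real.sq_sqrt (by linarith)
  have hs1 : s < 1 := by nlinarith
  set a : ℝ := (1 - s)/2 with ha_def
  set b : ℝ := (1 + s)/2 with hb_def
  clear_value a b s
  have ha0 : 0 < a := by rw [ha_def]; linarith
  have hb0 : 0 < b := by rw [hb_def]; linarith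
  have hb1 : b ≤ 1 := by rw [hb_def]; linarith
  have hbhalf : 1/2 ≤ b := by rw [hb_def]; linarith
  have hab : a ≤ b := by rw [ha_def, hb_def]; linarith
  have hsum : a + b = 1 := by rw [ha_def, hb_def]; ring
  have hab_prod : a * b = 1/ξ := by
    rw [ha_def, hb_def]; linear_combination (-(1:ℝ)/4) * hs2
  have hinv0 : (0:ℝ) < 1/ξ := by positivity
  have hinva : 1/ξ ≤ a := by
    calc 1/ξ = a * b := hab_prod.symm
      _ ≤ a * 1 := mul_le_mul_of_nonneg_left hb1 ha0.le
      _ = a := mul_one a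
  have hquad : ∀ x : ℝ, (x - a) * (x - b) = x^2 - x + 1/ξ := fun x => by
    linear_combination hab_prod - x * hsum
  have hξx1 : ξ * (1/ξ) = 1 := by field_simp
  -- on pieces outside [a,b], the max is 1/(ξx)
  have hmax_out : ∀ x : ℝ, 0 < x → 0 ≤ (x - a) * (x - b) →
      max (1 - x) (1/(ξ*x)) = 1/(ξ*x) := by
    intro x hx0 hq
    rw [hquad x] at hq
    apply max_eq_right
    rw [le_div_iff₀ (by positivity)]
    nlinarith [mul_nonneg hξ.le hq]
  have hmax_mid : ∀ x ∈ Set.Ioc a b, max (1 - x) (1/(ξ*x)) = 1 - x := by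
    intro x hx
    have hx0 : 0 < x := lt_trans ha0 hx.1
    have hq : (x - a) * (x - b) ≤ 0 :=
      mul_nonpos_iff.2 (Or.inl ⟨sub_nonneg.2 hx.1.le, sub_nonpos.2 hx.2⟩)
    rw [hquad x] at hq
    apply max_eq_left
    rw [div_le_iff₀ (by positivity)]
    nlinarith [mul_nonpos_of_nonneg_of_nonpos hξ.le hq]
  -- split the domain
  rw [volume_regionA_eq ξ hξ,
    ← Set.Ioc_union_Ioc_eq_Ioc (le_of_lt hb0) hb1,
    lintegral_union measurableSet_Ioc (Set.Ioc_disjoint_Ioc_of_le le_rfl),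
    ← Set.Ioc_union_Ioc_eq_Ioc (le_of_lt ha0) hab,
    lintegral_union measurableSet_Ioc (Set.Ioc_disjoint_Ioc_of_le le_rfl),
    ← Set.Ioc_union_Ioc_eq_Ioc (le_of_lt hinv0) hinva,
    lintegral_union measurableSet_Ioc (Set.Ioc_disjoint_Ioc_of_le le_rfl)]
  -- zero piece
  have hzero : ∫⁻ x in Set.Ioc (0:ℝ) (1/ξ), ENNReal.ofReal (1 - max (1 - x) (1/(ξ*x))) = 0 := by
    rw [setLIntegral_congr_fun measurableSet_Ioc (fun x hx => ?_), lintegral_zero]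
    have hx0 : 0 < x := hx.1
    have h1le : 1 ≤ 1/(ξ*x) := by
      rw [le_div_iff₀ (by positivity), one_mul]
      calc ξ * x ≤ ξ * (1/ξ) := mul_le_mul_of_nonneg_left hx.2 hξ.le
        _ = 1 := hξx1
    rw [ENNReal.ofReal_eq_zero]
    have := le_max_right (1-x) (1/(ξ*x))
    linarith
  -- piece on (1/ξ, a]
  have hcongr1 : ∫⁻ x in Set.Ioc (1/ξ) a, ENNReal.ofReal (1 - max (1 - x) (1/(ξ*x)))
      = ∫⁻ x in Set.Ioc (1/ξ) a, ENNReal.ofReal (1 - 1/(ξ*x)) := by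
    refine setLIntegral_congr_fun measurableSet_Ioc (fun x hx => ?_)
    rw [hmax_out x (lt_trans hinv0 hx.1)
      (by nlinarith [hx.2, hab])]
  have hcongr2 : ∫⁻ x in Set.Ioc a b, ENNReal.ofReal (1 - max (1 - x) (1/(ξ*x)))
      = ∫⁻ x in Set.Ioc a b, ENNReal.ofReal x := by
    refine setLIntegral_congr_fun measurableSet_Ioc (fun x hx => ?_)
    rw [hmax_mid x hx]; ring_nf
  have hcongr3 : ∫⁻ x in Set.Ioc b 1, ENNReal.ofReal (1 - max (1 - x) (1/(ξ*x)))
      = ∫⁻ x in Set.Ioc b 1, ENNReal.ofReal (1 - 1/(ξ*x)) := by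
    refine setLIntegral_congr_fun measurableSet_Ioc (fun x hx => ?_)
    rw [hmax_out x (lt_trans hb0 hx.1)
      (mul_nonneg (by linarith [hx.1.le, hab]) (by linarith [hx.1.le]))]
  have hnn1 : ∀ x ∈ Set.Ioc (1/ξ) a, (0:ℝ) ≤ 1 - 1/(ξ*x) := by
    intro x hx
    have hx0 : 0 < x := lt_trans hinv0 hx.1
    have : 1/(ξ*x) ≤ 1 := by
      rw [div_le_one (by positivity)]
      calc 1 = ξ * (1/ξ) := hξx1.symm
        _ ≤ ξ * x := mul_le_mul_of_nonneg_left hx.1.le hξ.le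
    linarith
  have hnn3 : ∀ x ∈ Set.Ioc b 1, (0:ℝ) ≤ 1 - 1/(ξ*x) := by
    intro x hx
    have hx0 : 0 < x := lt_trans hb0 hx.1
    have : 1/(ξ*x) ≤ 1 := by
      rw [div_le_one (by positivity)]
      nlinarith [hx.1.le]
    linarith
  rw [hzero, hcongr1, hcongr2, hcongr3, zero_add,
    piece _ _ hinva _ (cont_integrand hξ hinv0) hnn1,
    piece _ _ hab (fun x => x) ((ContinuousOn.integrableOn_Icc (by fun_prop)).mono_set
      Set.Ioc_subset_Icc_self) (fun x hx => le_of_lt (lt_trans ha0 hx.1)),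
    piece _ _ hb1 _ (cont_integrand hξ hb0) hnn3,
    eval_piece hξ hinv0 hinva, eval_piece hξ hb0 hb1]
  have hi2 : ∫ x in a..b, x = (b^2 - a^2)/2 := integral_id
  rw [hi2]
  -- nonnegativity of the three real integrals
  have hr1 : (0:ℝ) ≤ (a - 1/ξ) - (1/ξ) * (Real.log a - Real.log (1/ξ)) := by
    rw [← eval_piece hξ hinv0 hinva]
    apply intervalIntegral.integral_nonneg hinva
    intro x hx
    have hx0 : 0 < x := lt_of_lt_of_le hinv0 hx.1
    have : 1/(ξ*x) ≤ 1 := by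
      rw [div_le_one (by positivity)]
      calc 1 = ξ * (1/ξ) := hξx1.symm
        _ ≤ ξ * x := mul_le_mul_of_nonneg_left hx.1 hξ.le
    linarith
  have hr2 : (0:ℝ) ≤ (b^2 - a^2)/2 := by nlinarith
  have hr3 : (0:ℝ) ≤ (1 - b) - (1/ξ) * (Real.log 1 - Real.log b) := by
    rw [← eval_piece hξ hb0 hb1]
    apply intervalIntegral.integral_nonneg hb1
    intro x hx
    have hx0 : 0 < x := lt_of_lt_of_le hb0 hx.1
    have : 1/(ξ*x) ≤ 1 := by
      rw [div_le_one (by positivity)]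
      nlinarith [hx.1]
    linarith
  rw [← ENNReal.ofReal_add hr1 hr2, ← ENNReal.ofReal_add (by linarith) hr3]
  congr 1
  have hloga : Real.log a = -Real.log ξ - Real.log b := by
    have h := Real.log_mul (ne_of_gt ha0) (ne_of_gt hb0)
    rw [hab_prod, one_div, Real.log_inv] at h
    linarith
  rw [hloga, Real.log_one, one_div, Real.log_inv, ha_def, hb_def]
  ring

lemma case1 {ξ : ℝ} (hξ : 0 < ξ) (h1 : ξ ≤ 1) : volume (regionA ξ) = 0 := by
  have hsub : regionA ξ ⊆ {((1:ℝ), (1:ℝ))} := by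
    rintro p ⟨⟨hx0, hx1⟩, ⟨hy0, hy1⟩, -, hxy⟩
    have h1ξ : 1 ≤ 1/ξ := by rw [le_div_iff₀ hξ, one_mul]; exact h1
    have h1p : 1 ≤ p.1 * p.2 := le_trans h1ξ hxy
    have px : p.1 = 1 := by nlinarith
    have py : p.2 = 1 := by nlinarith
    simp [Set.mem_singleton_iff, Prod.ext_iff, px, py]
  refine le_antisymm (le_trans (measure_mono hsub) ?_) zero_le
  rw [show ({((1:ℝ), (1:ℝ))} : Set (ℝ × ℝ)) = {(1:ℝ)} ×ˢ {(1:ℝ)} from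
    (Set.singleton_prod_singleton).symm, Measure.volume_eq_prod, Measure.prod_prod,
    Real.volume_singleton, mul_zero]


/-- Explicit formula for the Lebesgue measure of `A(ξ)`. -/
theorem measure_regionA (ξ : ℝ) (hξ : 0 < ξ) :
    (ξ ≤ 1 → volume (regionA ξ) = 0) ∧
    (1 ≤ ξ → ξ ≤ 4 →
      volume (regionA ξ) = ENNReal.ofReal (1 - (Real.log ξ + 1) / ξ)) ∧
    (4 ≤ ξ →
      volume (regionA ξ) = ENNReal.ofReal
        (1 - 1 / ξ - (1 / 2) * Real.sqrt (1 - 4 / ξ) +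
          (2 / ξ) * Real.log ((1 + Real.sqrt (1 - 4 / ξ)) / 2))) :=
  ⟨fun h1 => case1 hξ h1, fun h1 h4 => case2 h1 h4, fun h4 => case3 h4⟩
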